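/- Let m, d, ℓ be natural numbers with ℓ > d and m ≥ 1, let F be a field, and let a₀, a₁, …, a_{ℓ−1} be ℓ distinct elements of F. Let S = {(a_{x₁}, …, a_{x_m}) : x ∈ ℕ^m, x₁ + ⋯ + x_m < ℓ} be the combinatorial simplex determined by this sequence. Then every nonzero polynomial f ∈ F[X₁,…,X_m] of total degree at most d is nonzero at at least binom(ℓ−d+m−1, m) points of S. Consequently, the linear code obtained by evaluating all m-variate polynomials of degree at most d on S has minimum Hamming distance at least binom(ℓ−d+m−1, m). -/

import Mathlib

open MvPolynomial
open scoped Classical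

/-- Hockey stick identity in the form we need. -/
private lemma cap_hockey (k R : ℕ) :
    ∑ r ∈ Finset.range R, (r + k).choose k = (R + k).choose (k+1) := by
  induction R with
  | zero => simp [Nat.choose_eq_zero_of_lt]
  | succ R ih =>
    rw [Finset.sum_range_succ, ih, show R + 1 + k = (R + k) + 1 by omega,
      Nat.choose_succ_succ' (R + k) k, Nat.add_comm]

/-- Removing at most `t` elements from `range M` and summing an antitone weight is at least
summing the weight over `Ico t M`. -/
private lemma cap_rearr (w : ℕ → ℕ) (hw : ∀ i j, i ≤ j → w j ≤ w i) :
    ∀ (t M : ℕ) (G : Finset ℕ), G ⊆ Finset.range M → (Finset.range M \ G).card ≤ t →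
    ∑ j ∈ Finset.Ico t M, w j ≤ ∑ j ∈ G, w j := by
  intro t
  induction t with
  | zero =>
    intro M G hG hc
    have h0 : Finset.range M \ G = ∅ := Finset.card_eq_zero.mp (Nat.le_zero.mp hc)
    have hGe : G = Finset.range M :=
      Finset.Subset.antisymm hG (fun x hx => by
        by_contra hxG
        exact absurd (Finset.mem_sdiff.mpr ⟨hx, hxG⟩) (by rw [h0]; simp))
    rw [hGe, Finset.range_eq_Ico]
  | succ t ih =>
    intro M G hG hc
    by_cases hc' : (Finset.range M \ G).card ≤ t
    · calc ∑ j ∈ Finset.Ico (t+1) M, w j ≤ ∑ j ∈ Finset.Ico t M, w j :=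
            Finset.sum_le_sum_of_subset (Finset.Ico_subset_Ico (by omega) le_rfl)
        _ ≤ ∑ j ∈ G, w j := ih M G hG hc'
    · have hcard : (Finset.range M \ G).card = t + 1 := by omega
      have hne : (Finset.range M \ G).Nonempty := by
        rw [← Finset.card_pos, hcard]; omega
      set B := Finset.range M \ G with hB
      set b := B.max' hne with hbdef
      have hbB : b ∈ B := B.max'_mem hne
      have hbM : b < M := Finset.mem_range.mp (Finset.mem_sdiff.mp hbB).1
      have hbG : b ∉ G := (Finset.mem_sdiff.mp hbB).2
      have htb : t ≤ b := by
        have hsub : B ⊆ Finset.range (b + 1) := fun x hx =>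
          Finset.mem_range.mpr (Nat.lt_succ_of_le (B.le_max' x hx))
        have := Finset.card_le_card hsub
        rw [hcard, Finset.card_range] at this; omega
      have hG' : insert b G ⊆ Finset.range M := by
        intro x hx
        rcases Finset.mem_insert.mp hx with rfl | hx
        · exact Finset.mem_range.mpr hbM
        · exact hG hx
      have hB' : Finset.range M \ insert b G = B.erase b := by
        rw [hB, Finset.sdiff_insert]
      have hIH := ih M (insert b G) hG' (by rw [hB', Finset.card_erase_of_mem hbB, hcard]; omega)
      rw [Finset.sum_insert hbG] at hIH
      have htM : t < M := lt_of_le_of_lt htb hbM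
      rw [← Finset.insert_Ico_add_one_left_eq_Ico htM, Finset.sum_insert (by simp)] at hIH
      have := hw t b htb
      omega

/-- The main counting inequality for `ℕ`-indexed good sets. -/
private lemma cap_sum_choose_lower (k t M : ℕ) (htM : t ≤ M) (G : Finset ℕ)
    (hG : G ⊆ Finset.range M) (hc : (Finset.range M \ G).card ≤ t) :
    (M - t + k).choose (k+1) ≤ ∑ j ∈ G, (M - 1 - j + k).choose k := by
  have hw : ∀ i j : ℕ, i ≤ j → (M - 1 - j + k).choose k ≤ (M - 1 - i + k).choose k :=
    fun i j hij => Nat.choose_le_choose k (by omega)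
  have h1 := cap_rearr _ hw t M G hG hc
  refine le_trans (le_of_eq ?_) h1
  rw [← cap_hockey k (M - t)]
  refine Finset.sum_nbij' (fun r => M - 1 - r) (fun j => M - 1 - j) ?_ ?_ ?_ ?_ ?_ <;>
    intro x hx <;> simp only [Finset.mem_range, Finset.mem_Ico] at * <;>
    first | omega | (congr 1; omega)

/-- Univariate step: a nonzero polynomial of `natDegree ≤ t` is nonzero at many points of
an initial segment of the distinct points `a j`, counted with binomial weights. -/
private lemma cap_fin_inner {F : Type*} [Field F] (ℓ t k s : ℕ) (a : Fin ℓ → F)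
    (ha : Function.Injective a) (q : Polynomial F) (hq0 : q ≠ 0)
    (hqdeg : q.natDegree ≤ t) (hst : s + t < ℓ) :
    (ℓ - s - t + k).choose (k+1) ≤
      ∑ j ∈ Finset.univ.filter (fun j : Fin ℓ =>
          (j : ℕ) < ℓ - s ∧ Polynomial.eval (a j) q ≠ 0),
        (ℓ - 1 - ((j : ℕ) + s) + k).choose k := by
  set G : Finset (Fin ℓ) := Finset.univ.filter (fun j : Fin ℓ =>
      (j : ℕ) < ℓ - s ∧ Polynomial.eval (a j) q ≠ 0) with hG
  set B : Finset (Fin ℓ) := Finset.univ.filter (fun j : Fin ℓ =>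
      (j : ℕ) < ℓ - s ∧ Polynomial.eval (a j) q = 0) with hB
  have hBcard : B.card ≤ t := by
    have h1 : B.image a ⊆ q.roots.toFinset := by
      intro y hy
      obtain ⟨j, hj, rfl⟩ := Finset.mem_image.mp hy
      rw [hB, Finset.mem_filter] at hj
      rw [Multiset.mem_toFinset, Polynomial.mem_roots hq0]
      exact hj.2.2
    calc B.card = (B.image a).card := (Finset.card_image_of_injective B ha).symm
      _ ≤ q.roots.toFinset.card := Finset.card_le_card h1
      _ ≤ Multiset.card q.roots := q.roots.toFinset_card_le
      _ ≤ q.natDegree := q.card_roots'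
      _ ≤ t := hqdeg
  have hsum : ∑ jn ∈ G.image Fin.val, (ℓ - s - 1 - jn + k).choose k =
      ∑ j ∈ G, (ℓ - 1 - ((j : ℕ) + s) + k).choose k := by
    rw [Finset.sum_image (fun x _ y _ h => Fin.val_injective h)]
    exact Finset.sum_congr rfl (fun j _ => by congr 1; omega)
  have hGsub : G.image Fin.val ⊆ Finset.range (ℓ - s) := by
    intro jn hjn
    obtain ⟨j, hj, rfl⟩ := Finset.mem_image.mp hjn
    rw [hG, Finset.mem_filter] at hj
    exact Finset.mem_range.mpr hj.2.1
  have hcsub : Finset.range (ℓ - s) \ G.image Fin.val ⊆ B.image Fin.val := by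
    intro jn hjn
    rw [Finset.mem_sdiff, Finset.mem_range] at hjn
    obtain ⟨h1, h2⟩ := hjn
    have hjl : jn < ℓ := by omega
    refine Finset.mem_image.mpr ⟨⟨jn, hjl⟩, ?_, rfl⟩
    rw [hB, Finset.mem_filter]
    refine ⟨Finset.mem_univ _, h1, ?_⟩
    by_contra hne
    exact h2 (Finset.mem_image.mpr ⟨⟨jn, hjl⟩, by
      rw [hG, Finset.mem_filter]; exact ⟨Finset.mem_univ _, h1, hne⟩, rfl⟩)
  have hc : (Finset.range (ℓ - s) \ G.image Fin.val).card ≤ t := by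
    refine le_trans (Finset.card_le_card hcsub) ?_
    rw [Finset.card_image_of_injective B Fin.val_injective]
    exact hBcard
  have hmain := cap_sum_choose_lower k t (ℓ - s) (by omega) _ hGsub hc
  rw [hsum] at hmain
  exact hmain

/-- Key weighted counting lemma, by induction on the number of variables. -/
private lemma cap_key {F : Type*} [Field F] :
    ∀ (m : ℕ) (k ℓ d : ℕ), d < ℓ → ∀ a : Fin ℓ → F, Function.Injective a →
      ∀ f : MvPolynomial (Fin m) F, f ≠ 0 → f.totalDegree ≤ d →
      (ℓ - d - 1 + (m + k)).choose (m + k) ≤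
        ∑ x ∈ Finset.univ.filter (fun x : Fin m → Fin ℓ =>
          (∑ i, (x i : ℕ)) < ℓ ∧ MvPolynomial.eval (fun i => a (x i)) f ≠ 0),
        (ℓ - 1 - ∑ i, (x i : ℕ) + k).choose k := by
  intro m
  induction m with
  | zero =>
    intro k ℓ d hd a ha f hf hdeg
    obtain ⟨c, rfl⟩ := MvPolynomial.C_surjective (Fin 0) f
    have hc : c ≠ 0 := fun h => hf (by rw [h, map_zero])
    have hcond : ∀ x : Fin 0 → Fin ℓ,
        (∑ i, (x i : ℕ)) < ℓ ∧ eval (fun i => a (x i)) (C c) ≠ 0 := by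
      intro x
      simp only [Finset.univ_eq_empty, Finset.sum_empty, eval_C]
      exact ⟨by omega, hc⟩
    rw [Finset.filter_true_of_mem (fun x _ => hcond x)]
    rw [Fintype.sum_unique]
    simp only [Finset.univ_eq_empty, Finset.sum_empty]
    rw [Nat.zero_add]
    exact Nat.choose_le_choose k (by omega)
  | succ m ih =>
    intro k ℓ d hd a ha f hf hdeg
    have hp0 : finSuccEquiv F m f ≠ 0 := by
      intro h
      exact hf ((map_eq_zero_iff _ (finSuccEquiv F m).injective).mp h)
    obtain ⟨t, htdef⟩ : ∃ t, (finSuccEquiv F m f).natDegree = t := ⟨_, rfl⟩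
    have hg0 : (finSuccEquiv F m f).coeff t ≠ 0 := by
      rw [← htdef, Polynomial.coeff_natDegree]
      exact Polynomial.leadingCoeff_ne_zero.mpr hp0
    have hgt : ((finSuccEquiv F m f).coeff t).totalDegree + t ≤ d :=
      le_trans (totalDegree_coeff_finSuccEquiv_add_le f t hg0) hdeg
    have htd : t ≤ d := le_trans (Nat.le_add_left _ _) hgt
    have hle : ℓ - t ≤ ℓ := Nat.sub_le _ _
    have hd' : d - t < ℓ - t := by omega
    have hIH := ih (k+1) (ℓ - t) (d - t) hd' (fun j => a (Fin.castLE hle j))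
      (fun x y h => Fin.castLE_injective hle (ha h)) ((finSuccEquiv F m f).coeff t) hg0
      (by omega)
    obtain ⟨T', hT'⟩ : ∃ T' : Finset (Fin m → Fin (ℓ - t)), T' = Finset.univ.filter (fun x' =>
        (∑ i, (x' i : ℕ)) < ℓ - t ∧
          eval (fun i => a (Fin.castLE hle (x' i))) ((finSuccEquiv F m f).coeff t) ≠ 0) :=
      ⟨_, rfl⟩
    rw [← hT'] at hIH
    obtain ⟨Gd, hGd⟩ : ∃ Gd : (Fin m → Fin (ℓ - t)) → Finset (Fin ℓ), Gd = fun x' =>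
        Finset.univ.filter (fun j : Fin ℓ => (j : ℕ) < ℓ - (∑ i, (x' i : ℕ)) ∧
          Polynomial.eval (a j)
            ((finSuccEquiv F m f).map (eval (fun i => a (Fin.castLE hle (x' i))))) ≠ 0) :=
      ⟨_, rfl⟩
    have key2 : ∀ x' ∈ T',
        ((ℓ - t) - 1 - (∑ i, (x' i : ℕ)) + (k+1)).choose (k+1) ≤
          ∑ j ∈ Gd x', (ℓ - 1 - ((j : ℕ) + (∑ i, (x' i : ℕ))) + k).choose k := by
      intro x' hx'
      rw [hT', Finset.mem_filter] at hx'
      obtain ⟨-, hs, hgx⟩ := hx'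
      have hq0 : (finSuccEquiv F m f).map (eval (fun i => a (Fin.castLE hle (x' i)))) ≠ 0 := by
        intro h
        apply hgx
        have := congrArg (fun q => Polynomial.coeff q t) h
        simpa [Polynomial.coeff_map] using this
      have hqdeg : ((finSuccEquiv F m f).map
          (eval (fun i => a (Fin.castLE hle (x' i))))).natDegree ≤ t :=
        le_trans Polynomial.natDegree_map_le (le_of_eq htdef)
      have hst : (∑ i, (x' i : ℕ)) + t < ℓ := by clear * - hs htd hd; omega
      have h1 := cap_fin_inner ℓ t k (∑ i, (x' i : ℕ)) a ha _ hq0 hqdeg hst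
      simp only [hGd]
      have heq : (ℓ - t) - 1 - (∑ i, (x' i : ℕ)) + (k+1)
          = ℓ - (∑ i, (x' i : ℕ)) - t + k := by
        clear * - hs htd hd; omega
      rw [heq]
      exact h1
    have hchain := le_trans hIH (Finset.sum_le_sum key2)
    refine le_trans (le_of_eq (by congr 1 <;> (clear * - htd hd; omega)))
      (le_trans hchain ?_)
    rw [← Finset.sum_sigma T' Gd
      (fun y => (ℓ - 1 - ((y.2 : ℕ) + (∑ i, (y.1 i : ℕ))) + k).choose k)]
    obtain ⟨e, he⟩ : ∃ e : (Σ _ : Fin m → Fin (ℓ - t), Fin ℓ) → (Fin (m+1) → Fin ℓ),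
        e = fun y => Fin.cons y.2 (fun i => Fin.castLE hle (y.1 i)) := ⟨_, rfl⟩
    have hinj : ∀ y1 ∈ T'.sigma Gd, ∀ y2 ∈ T'.sigma Gd, e y1 = e y2 → y1 = y2 := by
      rintro ⟨x1, j1⟩ - ⟨x2, j2⟩ - h
      simp only [he] at h
      have hj : j1 = j2 := by
        have := congrFun h 0
        simpa [Fin.cons_zero] using this
      have hx : x1 = x2 := by
        funext i
        have := congrFun h i.succ
        simp only [Fin.cons_succ] at this
        exact Fin.castLE_injective hle this
      simp [hj, hx]
    have himg := Finset.sum_image (g := e) (f := fun x : Fin (m+1) → Fin ℓ =>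
        (ℓ - 1 - (∑ i, (x i : ℕ)) + k).choose k) hinj
    have hsumeq : ∀ y : Σ _ : Fin m → Fin (ℓ - t), Fin ℓ,
        ∑ i, ((e y) i : ℕ) = (y.2 : ℕ) + ∑ i, (y.1 i : ℕ) := by
      rintro ⟨x', j⟩
      rw [he]
      rw [Fin.sum_univ_succ]
      simp [Fin.cons_zero, Fin.cons_succ]
    calc ∑ y ∈ T'.sigma Gd, (ℓ - 1 - ((y.2 : ℕ) + (∑ i, (y.1 i : ℕ))) + k).choose k
        = ∑ x ∈ (T'.sigma Gd).image e,
            (ℓ - 1 - (∑ i, (x i : ℕ)) + k).choose k := by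
          rw [himg]
          refine Finset.sum_congr rfl (fun y _ => ?_)
          simp only [hsumeq y]
      _ ≤ _ := by
          refine Finset.sum_le_sum_of_subset ?_
          intro x hx
          obtain ⟨⟨x', j⟩, hy, rfl⟩ := Finset.mem_image.mp hx
          rw [he]
          rw [Finset.mem_sigma] at hy
          obtain ⟨hy1, hy2⟩ := hy
          rw [hT', Finset.mem_filter] at hy1
          rw [hGd] at hy2
          rw [Finset.mem_filter] at hy2
          rw [Finset.mem_filter]
          refine ⟨Finset.mem_univ _, ?_, ?_⟩
          · have := hsumeq ⟨x', j⟩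
            rw [he] at this
            rw [this]
            have h21 := hy2.2.1
            clear * - h21; omega
          · have hcomp : (fun i => a ((Fin.cons j (fun i => Fin.castLE hle (x' i))
                : Fin (m+1) → Fin ℓ) i)) =
                Fin.cons (a j) (fun i => a (Fin.castLE hle (x' i))) := by
              funext i
              refine Fin.cases ?_ (fun i => ?_) i
              · simp [Fin.cons_zero]
              · simp [Fin.cons_succ]
            rw [hcomp, eval_eq_eval_mv_eval']
            exact hy2.2.2

/-- CAP codes have distance at least `binom(ℓ-d+m-1, m)`: every nonzero
polynomial of total degree at most `d < ℓ` is nonzero at at least `binom(ℓ-d+m-1, m)`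
points of the combinatorial simplex determined by `ℓ` distinct field elements; hence the
evaluation code on the simplex has minimum Hamming distance at least `binom(ℓ-d+m-1, m)`. -/
theorem stmt_5 {F : Type*} [Field F] (m d ℓ : ℕ) (hm : 1 ≤ m) (hd : d < ℓ)
    (a : Fin ℓ → F) (ha : Function.Injective a)
    (S : Set (Fin m → F))
    (hS : S = {p | ∃ x : Fin m → Fin ℓ, (∑ i, (x i : ℕ)) < ℓ ∧ p = fun i => a (x i)}) :
    (∀ f : MvPolynomial (Fin m) F, f ≠ 0 → f.totalDegree ≤ d →
      ((ℓ - d + m - 1).choose m : ℕ∞) ≤ {p ∈ S | MvPolynomial.eval p f ≠ 0}.encard) ∧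
    (∀ f g : MvPolynomial (Fin m) F, f.totalDegree ≤ d → g.totalDegree ≤ d → f ≠ g →
      ((ℓ - d + m - 1).choose m : ℕ∞) ≤
        {p ∈ S | MvPolynomial.eval p f ≠ MvPolynomial.eval p g}.encard) := by
  subst hS
  have main : ∀ f : MvPolynomial (Fin m) F, f ≠ 0 → f.totalDegree ≤ d →
      ((ℓ - d + m - 1).choose m : ℕ∞) ≤
        {p ∈ {p | ∃ x : Fin m → Fin ℓ, (∑ i, (x i : ℕ)) < ℓ ∧ p = fun i => a (x i)} |
          MvPolynomial.eval p f ≠ 0}.encard := by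
    intro f hf hdeg
    have hkey := cap_key m 0 ℓ d hd a ha f hf hdeg
    set T : Finset (Fin m → Fin ℓ) := Finset.univ.filter (fun x : Fin m → Fin ℓ =>
      (∑ i, (x i : ℕ)) < ℓ ∧ MvPolynomial.eval (fun i => a (x i)) f ≠ 0) with hT
    have hcard : (ℓ - d + m - 1).choose m ≤ T.card := by
      have h1 : ∑ x ∈ T, (ℓ - 1 - ∑ i, (x i : ℕ) + 0).choose 0 = T.card := by
        rw [Finset.card_eq_sum_ones]
        exact Finset.sum_congr rfl (fun x _ => Nat.choose_zero_right _)
      rw [h1] at hkey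
      refine le_trans (le_of_eq ?_) hkey
      have h2 : ℓ - d + m - 1 = ℓ - d - 1 + (m + 0) := by clear * - hd hm; omega
      rw [h2, Nat.add_zero]
    have hinj2 : ∀ x ∈ T, ∀ y ∈ T,
        ((fun x : Fin m → Fin ℓ => fun i => a (x i)) x
          = (fun x : Fin m → Fin ℓ => fun i => a (x i)) y) → x = y := by
      intro x _ y _ h
      funext i
      exact ha (congrFun h i)
    have hsub : ↑(T.image (fun x : Fin m → Fin ℓ => fun i => a (x i))) ⊆
        {p ∈ {p | ∃ x : Fin m → Fin ℓ, (∑ i, (x i : ℕ)) < ℓ ∧ p = fun i => a (x i)} |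
          MvPolynomial.eval p f ≠ 0} := by
      intro p hp
      rw [Finset.coe_image, Set.mem_image] at hp
      obtain ⟨x, hx, rfl⟩ := hp
      rw [Finset.mem_coe, hT, Finset.mem_filter] at hx
      exact ⟨⟨x, hx.2.1, rfl⟩, hx.2.2⟩
    calc ((ℓ - d + m - 1).choose m : ℕ∞) ≤ (T.card : ℕ∞) := by
          exact_mod_cast hcard
      _ = ((T.image (fun x : Fin m → Fin ℓ => fun i => a (x i))).card : ℕ∞) := by
          rw [Finset.card_image_of_injOn (fun x hx y hy h => hinj2 x hx y hy h)]
      _ = (↑(T.image (fun x : Fin m → Fin ℓ => fun i => a (x i))) : Set (Fin m → F)).encard :=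
          (Set.encard_coe_eq_coe_finsetCard _).symm
      _ ≤ _ := Set.encard_le_encard hsub
  refine ⟨main, ?_⟩
  intro f g hfdeg hgdeg hne
  have hsubne : f - g ≠ 0 := sub_ne_zero.mpr hne
  have hsubdeg : (f - g).totalDegree ≤ d :=
    le_trans (MvPolynomial.totalDegree_sub f g) (max_le hfdeg hgdeg)
  have h := main (f - g) hsubne hsubdeg
  refine le_trans h (le_of_eq ?_)
  congr 1
  ext p
  simp [sub_ne_zero, map_sub]
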